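/- Let K/k be a quadratic extension of number fields, v₀ a place of k with K ⊆ k_{v₀}, w₀ a place of K above v₀, and U a finite-index subgroup of the norm-one unit group 𝔬_K¹. Then for every δ > 0 there exists ε ∈ U with |ε|_{w₀} < δ and 1/(1+δ) < |ε|_w < 1+δ for all archimedean places w of K not lying above v₀. -/

import Mathlib

open NumberField Finset NumberField.InfinitePlace
open scoped Classical

section Fiber

variable {k K : Type*} [Field k] [Field K] [NumberField k] [NumberField K] [Algebra k K]
variable [FiniteDimensional k K]

/-- Ring homs `K →+* ℂ` extending a fixed `φ : k →+* ℂ` are in bijection with `k`-algebra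
homs for the `φ`-algebra structure. -/
noncomputable def extEquiv (φ : k →+* ℂ) :
    letI : Algebra k ℂ := φ.toAlgebra
    (K →ₐ[k] ℂ) ≃ {σ : K →+* ℂ // σ.comp (algebraMap k K) = φ} := by
  letI : Algebra k ℂ := φ.toAlgebra
  refine
    { toFun := fun σ => ⟨σ.toRingHom, by ext a; exact σ.commutes a⟩
      invFun := fun σ => ⟨σ.1, fun a => (RingHom.congr_fun σ.2 a : _)⟩
      left_inv := fun σ => by ext x; rfl
      right_inv := fun σ => by ext x; rfl }

lemma prod_ext_eq_norm (φ : k →+* ℂ) (x : K) :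
    ∏ σ ∈ univ.filter (fun σ : K →+* ℂ => σ.comp (algebraMap k K) = φ),
      ‖σ x‖ = ‖φ (Algebra.norm k x)‖ := by
  letI : Algebra k ℂ := φ.toAlgebra
  have h := Algebra.norm_eq_prod_embeddings k ℂ (x := x)
  have h2 : ‖φ (Algebra.norm k x)‖
      = ∏ σ : K →ₐ[k] ℂ, ‖σ x‖ := by
    rw [show φ (Algebra.norm k x) = algebraMap k ℂ (Algebra.norm k x) from rfl, h, norm_prod]
  rw [h2]
  rw [Finset.prod_subtype (univ.filter (fun σ : K →+* ℂ => σ.comp (algebraMap k K) = φ))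
      (p := fun σ : K →+* ℂ => σ.comp (algebraMap k K) = φ) (fun σ => by simp)
      (fun σ : K →+* ℂ => ‖σ x‖)]
  exact ((extEquiv (K := K) φ).prod_comp (fun σ => ‖σ.1 x‖)).symm

lemma card_ext_eq_finrank (φ : k →+* ℂ) :
    (univ.filter (fun σ : K →+* ℂ => σ.comp (algebraMap k K) = φ)).card
      = Module.finrank k K := by
  letI : Algebra k ℂ := φ.toAlgebra
  rw [← Fintype.card_subtype, ← Fintype.card_congr (extEquiv (K := K) φ)]
  exact AlgHom.card k K ℂ

end Fiber

section Fiber2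

variable {k K : Type*} [Field k] [Field K] [NumberField k] [NumberField K] [Algebra k K]
variable [FiniteDimensional k K]

lemma prod_fiber_eq_norm (v : InfinitePlace k) (x : K) :
    ∏ w ∈ univ.filter (fun w : InfinitePlace K => w.comap (algebraMap k K) = v),
      w x ^ w.mult = v (Algebra.norm k x) ^ v.mult := by
  classical
  set s : Finset (K →+* ℂ) :=
    univ.filter (fun σ : K →+* ℂ => (InfinitePlace.mk σ).comap (algebraMap k K) = v) with hs
  have hgrp1 : ∏ w ∈ univ.filter
      (fun w : InfinitePlace K => w.comap (algebraMap k K) = v),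
      (∏ σ ∈ s.filter (fun σ => InfinitePlace.mk σ = w), ‖σ x‖)
      = ∏ σ ∈ s, ‖σ x‖ :=
    Finset.prod_fiberwise_of_maps_to (fun σ hσ => by
      simp only [s, Finset.mem_coe, mem_filter, mem_univ, true_and] at hσ ⊢; exact hσ) _
  have hinner1 : ∀ w ∈ univ.filter
      (fun w : InfinitePlace K => w.comap (algebraMap k K) = v),
      (∏ σ ∈ s.filter (fun σ => InfinitePlace.mk σ = w), ‖σ x‖)
        = w x ^ w.mult := by
    intro w hw
    rw [mem_filter] at hw
    have hfs : s.filter (fun σ => InfinitePlace.mk σ = w)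
        = univ.filter (fun σ : K →+* ℂ => InfinitePlace.mk σ = w) := by
      ext σ
      simp only [s, mem_filter, mem_univ, true_and, and_iff_right_iff_imp]
      intro h; rw [h]; exact hw.2
    rw [hfs, ← card_filter_mk_eq w, ← Finset.prod_const]
    exact Finset.prod_congr rfl (fun σ hσ => by
      rw [← (mem_filter.mp hσ).2, InfinitePlace.apply])
  have hgrp2 : ∏ φ ∈ univ.filter (fun φ : k →+* ℂ => InfinitePlace.mk φ = v),
      (∏ σ ∈ s.filter (fun σ => σ.comp (algebraMap k K) = φ), ‖σ x‖)
      = ∏ σ ∈ s, ‖σ x‖ :=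
    Finset.prod_fiberwise_of_maps_to (fun σ hσ => by
      simp only [s, Finset.mem_coe, mem_filter, mem_univ, true_and] at hσ ⊢
      rw [← comap_mk]; exact hσ) _
  have hinner2 : ∀ φ ∈ univ.filter (fun φ : k →+* ℂ => InfinitePlace.mk φ = v),
      (∏ σ ∈ s.filter (fun σ => σ.comp (algebraMap k K) = φ), ‖σ x‖)
        = v (Algebra.norm k x) := by
    intro φ hφ
    rw [mem_filter] at hφ
    have hfs : s.filter (fun σ => σ.comp (algebraMap k K) = φ)
        = univ.filter (fun σ : K →+* ℂ => σ.comp (algebraMap k K) = φ) := by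
      ext σ
      simp only [s, mem_filter, mem_univ, true_and, and_iff_right_iff_imp]
      intro h; rw [comap_mk, h]; exact hφ.2
    rw [hfs, prod_ext_eq_norm, ← hφ.2, InfinitePlace.apply]
  calc ∏ w ∈ univ.filter (fun w : InfinitePlace K => w.comap (algebraMap k K) = v),
        w x ^ w.mult
      = ∏ σ ∈ s, ‖σ x‖ := by
        rw [← hgrp1]; exact Finset.prod_congr rfl (fun w hw => (hinner1 w hw).symm)
    _ = ∏ φ ∈ univ.filter (fun φ : k →+* ℂ => InfinitePlace.mk φ = v),
          v (Algebra.norm k x) := by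
        rw [← hgrp2]; exact Finset.prod_congr rfl (fun φ hφ => hinner2 φ hφ)
    _ = v (Algebra.norm k x) ^ v.mult := by
        rw [Finset.prod_const, card_filter_mk_eq]

lemma sum_mult_fiber (v : InfinitePlace k) :
    ∑ w ∈ univ.filter (fun w : InfinitePlace K => w.comap (algebraMap k K) = v),
      w.mult = Module.finrank k K * v.mult := by
  classical
  set s : Finset (K →+* ℂ) :=
    univ.filter (fun σ : K →+* ℂ => (InfinitePlace.mk σ).comap (algebraMap k K) = v) with hs
  have hgrp1 : s.card = ∑ w ∈ univ.filter
      (fun w : InfinitePlace K => w.comap (algebraMap k K) = v),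
      (s.filter (fun σ => InfinitePlace.mk σ = w)).card :=
    Finset.card_eq_sum_card_fiberwise (fun σ hσ => by
      simp only [s, Finset.mem_coe, mem_filter, mem_univ, true_and] at hσ ⊢; exact hσ)
  have hgrp2 : s.card = ∑ φ ∈ univ.filter (fun φ : k →+* ℂ => InfinitePlace.mk φ = v),
      (s.filter (fun σ => σ.comp (algebraMap k K) = φ)).card :=
    Finset.card_eq_sum_card_fiberwise (fun σ hσ => by
      simp only [s, Finset.mem_coe, mem_filter, mem_univ, true_and] at hσ ⊢
      rw [← comap_mk]; exact hσ)
  have h1 : ∑ w ∈ univ.filter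
      (fun w : InfinitePlace K => w.comap (algebraMap k K) = v),
      (s.filter (fun σ => InfinitePlace.mk σ = w)).card
      = ∑ w ∈ univ.filter
        (fun w : InfinitePlace K => w.comap (algebraMap k K) = v), w.mult := by
    refine Finset.sum_congr rfl (fun w hw => ?_)
    rw [mem_filter] at hw
    have hfs : s.filter (fun σ => InfinitePlace.mk σ = w)
        = univ.filter (fun σ : K →+* ℂ => InfinitePlace.mk σ = w) := by
      ext σ
      simp only [s, mem_filter, mem_univ, true_and, and_iff_right_iff_imp]
      intro h; rw [h]; exact hw.2
    rw [hfs, card_filter_mk_eq]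
  have h2 : ∑ φ ∈ univ.filter (fun φ : k →+* ℂ => InfinitePlace.mk φ = v),
      (s.filter (fun σ => σ.comp (algebraMap k K) = φ)).card
      = Module.finrank k K * v.mult := by
    have : ∀ φ ∈ univ.filter (fun φ : k →+* ℂ => InfinitePlace.mk φ = v),
        (s.filter (fun σ => σ.comp (algebraMap k K) = φ)).card = Module.finrank k K := by
      intro φ hφ
      rw [mem_filter] at hφ
      have hfs : s.filter (fun σ => σ.comp (algebraMap k K) = φ)
          = univ.filter (fun σ : K →+* ℂ => σ.comp (algebraMap k K) = φ) := by
        ext σ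
        simp only [s, mem_filter, mem_univ, true_and, and_iff_right_iff_imp]
        intro h; rw [comap_mk, h]; exact hφ.2
      rw [hfs, card_ext_eq_finrank]
    rw [Finset.sum_congr rfl this, Finset.sum_const, card_filter_mk_eq, smul_eq_mul, mul_comm]
  rw [← h1, ← hgrp1, hgrp2, h2]

end Fiber2

section PhiSec

variable (K : Type*) [Field K] [NumberField K]

/-- The full logarithmic map on units. -/
noncomputable def Phi (u : (𝓞 K)ˣ) : InfinitePlace K → ℝ :=
  fun w => (w.mult : ℝ) * Real.log (w ((u : 𝓞 K) : K))

variable {K}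

lemma Phi_mul (u u' : (𝓞 K)ˣ) : Phi K (u * u') = Phi K u + Phi K u' := by
  funext w
  simp only [Phi, Pi.add_apply]
  have : w (((u * u' : (𝓞 K)ˣ) : 𝓞 K) : K) = w ((u : 𝓞 K) : K) * w ((u' : 𝓞 K) : K) := by
    rw [← map_mul]
    norm_cast
  rw [this]
  rw [Real.log_mul (by simpa using NumberField.Units.coe_ne_zero u)
    (by simpa using NumberField.Units.coe_ne_zero u'), mul_add]

lemma Phi_one : Phi K 1 = 0 := by
  funext w
  simp [Phi]

lemma Phi_inv (u : (𝓞 K)ˣ) : Phi K u⁻¹ = -Phi K u := by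
  have := Phi_mul u u⁻¹
  rw [mul_inv_cancel, Phi_one] at this
  funext w
  have h := congrFun this w
  simp only [Pi.add_apply, Pi.zero_apply] at h
  simp only [Pi.neg_apply]
  linarith

variable (K) in
/-- `Phi` as an additive group hom. -/
noncomputable def PhiHom : Additive (𝓞 K)ˣ →+ (InfinitePlace K → ℝ) where
  toFun := fun u => Phi K u.toMul
  map_zero' := Phi_one
  map_add' := fun u u' => Phi_mul u.toMul u'.toMul

lemma Phi_zpow (u : (𝓞 K)ˣ) (n : ℤ) : Phi K (u ^ n) = (n : ℝ) • Phi K u := by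
  have h := map_zsmul (PhiHom K) n (Additive.ofMul u)
  have h2 : (Additive.ofMul u) = Additive.ofMul u := rfl
  have : Phi K (u ^ n) = (n : ℤ) • Phi K u := h
  rw [this]
  funext w
  simp

lemma Phi_pow (u : (𝓞 K)ˣ) (n : ℕ) : Phi K (u ^ n) = (n : ℝ) • Phi K u := by
  have := Phi_zpow u (n : ℤ)
  rw [zpow_natCast] at this
  simpa using this

lemma sum_Phi (u : (𝓞 K)ˣ) : ∑ w, Phi K u w = 0 := by
  have h := congr_arg Real.log (prod_eq_abs_norm ((u : 𝓞 K) : K))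
  rw [NumberField.Units.norm, Rat.cast_one, Real.log_one, Real.log_prod] at h
  · rw [← h]
    refine Finset.sum_congr rfl (fun w _ => ?_)
    rw [Real.log_pow]
    rfl
  · exact fun w _ => pow_ne_zero _ (AbsoluteValue.ne_zero _ (NumberField.Units.coe_ne_zero u))

lemma span_Phi {x : InfinitePlace K → ℝ} (hx : ∑ w, x w = 0) :
    x ∈ Submodule.span ℝ (Set.range (Phi K)) := by
  classical
  set ws := NumberField.Units.dirichletUnitTheorem.w₀ (K := K) with hws
  set π : (InfinitePlace K → ℝ) →ₗ[ℝ] ({w : InfinitePlace K // w ≠ ws} → ℝ) :=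
    LinearMap.funLeft ℝ ℝ Subtype.val with hπ
  have hπΦ : ∀ u : (𝓞 K)ˣ, π (Phi K u)
      = NumberField.Units.logEmbedding K (Additive.ofMul u) := fun u => rfl
  have hmap : Submodule.map π (Submodule.span ℝ (Set.range (Phi K))) = ⊤ := by
    rw [Submodule.map_span]
    refine le_antisymm le_top ?_
    rw [← NumberField.Units.dirichletUnitTheorem.unitLattice_span_eq_top (K := K)]
    refine Submodule.span_le.mpr ?_
    rintro y hy
    obtain ⟨z, -, rfl⟩ := hy
    exact Submodule.subset_span ⟨Phi K z.toMul, ⟨z.toMul, rfl⟩, (hπΦ z.toMul)⟩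
  obtain ⟨z, hz, hπz⟩ : ∃ z ∈ Submodule.span ℝ (Set.range (Phi K)), π z = π x := by
    have : π x ∈ Submodule.map π (Submodule.span ℝ (Set.range (Phi K))) := by
      rw [hmap]; trivial
    exact Submodule.mem_map.mp this
  have hz0 : ∑ w, z w = 0 := by
    set Lsum : (InfinitePlace K → ℝ) →ₗ[ℝ] ℝ := (∑ w : InfinitePlace K, LinearMap.proj w) with hL
    have hLs : ∀ y : InfinitePlace K → ℝ, Lsum y = ∑ w, y w := by
      intro y; simp [Lsum, LinearMap.proj]
    have : Submodule.span ℝ (Set.range (Phi K)) ≤ LinearMap.ker Lsum := by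
      rw [Submodule.span_le]
      rintro y ⟨u, rfl⟩
      simp only [SetLike.mem_coe, LinearMap.mem_ker]
      rw [hLs]; exact sum_Phi u
    have := this hz
    rw [LinearMap.mem_ker, hLs] at this
    exact this
  have hxz : x = z := by
    have hcoord : ∀ w : InfinitePlace K, w ≠ ws → x w = z w := by
      intro w hw
      exact (congrFun hπz ⟨w, hw⟩).symm
    funext w
    by_cases hw : w = ws
    · have h1 : ∑ w', (x - z) w' = 0 := by
        simp only [Pi.sub_apply, Finset.sum_sub_distrib, hx, hz0, sub_zero]
      have h2 : ∀ w' ∈ Finset.univ.erase ws, (x - z) w' = 0 := by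
        intro w' hw'
        have := Finset.ne_of_mem_erase hw'
        simp [Pi.sub_apply, hcoord w' this]
      rw [← Finset.add_sum_erase _ _ (Finset.mem_univ ws), Finset.sum_eq_zero h2,
        add_zero] at h1
      rw [hw]
      simpa [Pi.sub_apply, sub_eq_zero] using h1
    · exact hcoord w hw
  rwa [hxz]

end PhiSec

section Rel

variable (k : Type*) {K : Type*} [Field k] [Field K] [NumberField k] [NumberField K]
  [Algebra k K] [FiniteDimensional k K]

/-- For a unit `u`, the norm-one unit `u^2 / N(u)`. -/
noncomputable def nu (u : (𝓞 K)ˣ) : (𝓞 K)ˣ :=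
  u ^ 2 * (Units.map (algebraMap (𝓞 k) (𝓞 K)).toMonoidHom
    (Units.map (RingOfIntegers.norm k) u))⁻¹

lemma nu_spec (u : (𝓞 K)ˣ) :
    (((nu k u : (𝓞 K)ˣ) : 𝓞 K) : K)
      * algebraMap k K (Algebra.norm k ((u : 𝓞 K) : K)) = (((u : 𝓞 K) : K)) ^ 2 := by
  have h := RingOfIntegers.coe_algebraMap_norm k ((u : 𝓞 K))
  show (((u ^ 2 * (Units.map (algebraMap (𝓞 k) (𝓞 K)).toMonoidHom
      (Units.map (RingOfIntegers.norm k) u))⁻¹ : (𝓞 K)ˣ) : 𝓞 K) : K)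
      * algebraMap k K (Algebra.norm k ((u : 𝓞 K) : K)) = (((u : 𝓞 K) : K)) ^ 2
  push_cast
  rw [mul_assoc, ← h]
  norm_cast
  rw [show (algebraMap (𝓞 k) (𝓞 K)) ((RingOfIntegers.norm k) (u : 𝓞 K))
      = ((Units.map (algebraMap (𝓞 k) (𝓞 K)).toMonoidHom
          (Units.map (RingOfIntegers.norm k) u) : (𝓞 K)ˣ) : 𝓞 K) from rfl,
    Units.inv_mul, mul_one]

lemma norm_unit_ne_zero (u : (𝓞 K)ˣ) : Algebra.norm k ((u : 𝓞 K) : K) ≠ 0 := by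
  rw [Algebra.norm_ne_zero_iff]
  exact NumberField.Units.coe_ne_zero u

lemma norm_nu (hquad : Module.finrank k K = 2) (u : (𝓞 K)ˣ) :
    Algebra.norm k (((nu k u : (𝓞 K)ˣ) : 𝓞 K) : K) = 1 := by
  have h := congrArg (Algebra.norm k) (nu_spec k u)
  rw [map_mul, map_pow, Algebra.norm_algebraMap, hquad] at h
  have hy := norm_unit_ne_zero k u
  exact mul_right_cancel₀ (pow_ne_zero 2 hy) (by rw [h, one_mul])

lemma place_nu (u : (𝓞 K)ˣ) (w : InfinitePlace K) :
    w (((nu k u : (𝓞 K)ˣ) : 𝓞 K) : K)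
        * (w.comap (algebraMap k K)) (Algebra.norm k ((u : 𝓞 K) : K))
      = w ((u : 𝓞 K) : K) ^ 2 := by
  have h := congrArg w (nu_spec k u)
  rwa [map_mul, map_pow] at h

lemma log_fiber (v : InfinitePlace k) {x : K} (hx : x ≠ 0) :
    (v.mult : ℝ) * Real.log (v (Algebra.norm k x))
      = ∑ w ∈ univ.filter (fun w : InfinitePlace K => w.comap (algebraMap k K) = v),
          (w.mult : ℝ) * Real.log (w x) := by
  classical
  have h := congrArg Real.log (prod_fiber_eq_norm (k := k) (K := K) v x)
  have hlp := Real.log_prod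
    (s := univ.filter (fun w : InfinitePlace K => w.comap (algebraMap k K) = v))
    (f := fun w => w x ^ w.mult) (fun w _ => pow_ne_zero _ (AbsoluteValue.ne_zero _ hx))
  rw [hlp] at h
  simp_rw [Real.log_pow] at h
  exact h.symm

lemma Phi_nu (hquad : Module.finrank k K = 2) (u : (𝓞 K)ˣ) (w : InfinitePlace K) :
    Phi K (nu k u) w = 2 * Phi K u w
      - ((w.mult : ℝ) / ((w.comap (algebraMap k K)).mult : ℝ))
        * ∑ w' ∈ univ.filter (fun w' : InfinitePlace K =>
            w'.comap (algebraMap k K) = w.comap (algebraMap k K)),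
          Phi K u w' := by
  classical
  set v := w.comap (algebraMap k K) with hv
  set y := Algebra.norm k ((u : 𝓞 K) : K) with hy
  have hy0 : y ≠ 0 := norm_unit_ne_zero k u
  have hvy : v y ≠ 0 := AbsoluteValue.ne_zero _ hy0
  have hwnu : w (((nu k u : (𝓞 K)ˣ) : 𝓞 K) : K) ≠ 0 :=
    AbsoluteValue.ne_zero _ (NumberField.Units.coe_ne_zero (nu k u))
  have hlog : Real.log (w (((nu k u : (𝓞 K)ˣ) : 𝓞 K) : K))
      = 2 * Real.log (w ((u : 𝓞 K) : K)) - Real.log (v y) := by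
    have h := congrArg Real.log (place_nu k u w)
    rw [Real.log_mul hwnu hvy, Real.log_pow] at h
    push_cast at h
    linarith
  have hu0 : ((u : 𝓞 K) : K) ≠ 0 := by simpa using NumberField.Units.coe_ne_zero u
  have hfib : ∑ w' ∈ univ.filter (fun w' : InfinitePlace K =>
        w'.comap (algebraMap k K) = v), Phi K u w'
      = (v.mult : ℝ) * Real.log (v y) := by
    simp only [Phi]
    exact (log_fiber k v hu0).symm
  have hmv : ((v.mult : ℝ)) ≠ 0 := by
    exact_mod_cast (NumberField.InfinitePlace.mult_ne_zero)
  show (w.mult : ℝ) * Real.log (w (((nu k u : (𝓞 K)ˣ) : 𝓞 K) : K)) = _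
  rw [hlog, hfib]
  simp only [Phi]
  field_simp

end Rel

section Span

variable {k K : Type*} [Field k] [Field K] [NumberField k] [NumberField K]
  [Algebra k K] [FiniteDimensional k K]

lemma Phi_prod {ι : Type*} (s : Finset ι) (h : ι → (𝓞 K)ˣ) :
    Phi K (∏ i ∈ s, h i) = ∑ i ∈ s, Phi K (h i) := by
  classical
  induction s using Finset.induction with
  | empty => simpa using Phi_one
  | insert a s hx ih => rw [Finset.prod_insert hx, Phi_mul, ih, Finset.sum_insert hx]

lemma e_mem_span (hquad : Module.finrank k K = 2)
    (v₀ : InfinitePlace k) (w₀ wB : InfinitePlace K) (hne : w₀ ≠ wB)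
    (hw₀ : w₀.comap (algebraMap k K) = v₀) (hwB : wB.comap (algebraMap k K) = v₀)
    (hfiber : univ.filter (fun w : InfinitePlace K => w.comap (algebraMap k K) = v₀)
      = {w₀, wB})
    (N U : Subgroup (𝓞 K)ˣ)
    (hN : ∀ ε : (𝓞 K)ˣ, ε ∈ N ↔ Algebra.norm k ((ε : 𝓞 K) : K) = 1)
    (hUN : U ≤ N) (hindex : U.relIndex N ≠ 0) :
    (fun w : InfinitePlace K => (if w = w₀ then (1 : ℝ) else 0)
        - (if w = wB then (1 : ℝ) else 0))
      ∈ Submodule.span ℝ (Phi K '' (U : Set (𝓞 K)ˣ)) := by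
  classical
  set e : InfinitePlace K → ℝ := fun w => (if w = w₀ then (1 : ℝ) else 0)
      - (if w = wB then (1 : ℝ) else 0) with he
  set x : InfinitePlace K → ℝ := (2⁻¹ : ℝ) • e with hx
  have hxspan : x ∈ Submodule.span ℝ (Set.range (Phi K)) := by
    refine span_Phi ?_
    have h1 : ∑ w : InfinitePlace K, e w = 0 := by
      simp only [e, Finset.sum_sub_distrib, Finset.sum_ite_eq' Finset.univ,
        Finset.mem_univ, if_true, sub_self]
    simp only [hx, Pi.smul_apply, smul_eq_mul, ← Finset.mul_sum, h1, mul_zero]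
  set T : (InfinitePlace K → ℝ) →ₗ[ℝ] (InfinitePlace K → ℝ) :=
    { toFun := fun y w => 2 * y w
        - ((w.mult : ℝ) / ((w.comap (algebraMap k K)).mult : ℝ))
          * ∑ w' ∈ univ.filter (fun w' : InfinitePlace K =>
              w'.comap (algebraMap k K) = w.comap (algebraMap k K)), y w'
      map_add' := fun y z => by
        funext w
        simp only [Pi.add_apply, Finset.sum_add_distrib]
        ring
      map_smul' := fun c y => by
        funext w
        simp only [Pi.smul_apply, smul_eq_mul, RingHom.id_apply, ← Finset.mul_sum]
        ring } with hT
  have hT_phi : ∀ u : (𝓞 K)ˣ, T (Phi K u) = Phi K (nu k u) := by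
    intro u
    funext w
    rw [show T (Phi K u) w = 2 * Phi K u w
      - ((w.mult : ℝ) / ((w.comap (algebraMap k K)).mult : ℝ))
        * ∑ w' ∈ univ.filter (fun w' : InfinitePlace K =>
            w'.comap (algebraMap k K) = w.comap (algebraMap k K)), Phi K u w' from rfl]
    exact (Phi_nu k hquad u w).symm
  have hTx : T x = e := by
    funext w
    rw [show T x w = 2 * x w
      - ((w.mult : ℝ) / ((w.comap (algebraMap k K)).mult : ℝ))
        * ∑ w' ∈ univ.filter (fun w' : InfinitePlace K =>
            w'.comap (algebraMap k K) = w.comap (algebraMap k K)), x w' from rfl]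
    by_cases hv : w.comap (algebraMap k K) = v₀
    · have hsum : ∑ w' ∈ univ.filter (fun w' : InfinitePlace K =>
          w'.comap (algebraMap k K) = w.comap (algebraMap k K)), x w' = 0 := by
        rw [hv, hfiber, Finset.sum_pair hne]
        simp [hx, he, hne, Ne.symm hne]
      rw [hsum, mul_zero, sub_zero]
      simp only [hx, Pi.smul_apply, smul_eq_mul]
      ring
    · have hw1 : w ≠ w₀ := fun h => hv (h ▸ hw₀)
      have hw2 : w ≠ wB := fun h => hv (h ▸ hwB)
      have hxw : x w = 0 := by
        simp only [hx, Pi.smul_apply, smul_eq_mul, he, if_neg hw1, if_neg hw2,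
          sub_self, mul_zero]
      have hsum : ∑ w' ∈ univ.filter (fun w' : InfinitePlace K =>
          w'.comap (algebraMap k K) = w.comap (algebraMap k K)), x w' = 0 := by
        refine Finset.sum_eq_zero (fun w' hw' => ?_)
        rw [Finset.mem_filter] at hw'
        have h1 : w' ≠ w₀ := fun h => hv (by rw [← hw'.2, h, hw₀])
        have h2 : w' ≠ wB := fun h => hv (by rw [← hw'.2, h, hwB])
        simp only [hx, Pi.smul_apply, smul_eq_mul, he, if_neg h1, if_neg h2,
          sub_self, mul_zero]
      rw [hsum, hxw]
      simp [he, if_neg hw1, if_neg hw2]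
  have hestep : e ∈ Submodule.span ℝ (Phi K '' {u : (𝓞 K)ˣ | u ∈ N}) := by
    have h1 : T x ∈ Submodule.map T (Submodule.span ℝ (Set.range (Phi K))) :=
      Submodule.mem_map_of_mem hxspan
    rw [Submodule.map_span] at h1
    rw [← hTx]
    refine Submodule.span_le.mpr ?_ h1
    rintro y ⟨z, ⟨u, rfl⟩, rfl⟩
    refine Submodule.subset_span ⟨nu k u, ?_, (hT_phi u).symm⟩
    exact (hN (nu k u)).mpr (norm_nu k hquad u)
  have hfin : (U.subgroupOf N).FiniteIndex := ⟨hindex⟩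
  refine Submodule.span_le.mpr ?_ hestep
  rintro y ⟨ε, hε, rfl⟩
  set n := U.relIndex N with hn
  have hn0 : (n : ℝ) ≠ 0 := Nat.cast_ne_zero.mpr hindex
  have hpow : ε ^ n ∈ U := by
    have h1 : (⟨ε, hε⟩ : N) ^ n ∈ U.subgroupOf N := Subgroup.pow_index_mem _ _
    rwa [Subgroup.mem_subgroupOf] at h1
  have h2 : Phi K ε = (n : ℝ)⁻¹ • Phi K (ε ^ n) := by
    rw [Phi_pow, smul_smul, inv_mul_cancel₀ hn0, one_smul]
  rw [h2]
  exact Submodule.smul_mem _ _ (Submodule.subset_span ⟨ε ^ n, hpow, rfl⟩)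

end Span

section Final

variable {k K : Type*} [Field k] [Field K] [NumberField k] [NumberField K]
  [Algebra k K] [FiniteDimensional k K]

lemma fiber_structure (hquad : Module.finrank k K = 2) (v₀ : InfinitePlace k)
    (hsplit : ∃ w₁ w₂ : InfinitePlace K, w₁ ≠ w₂ ∧
      w₁.comap (algebraMap k K) = v₀ ∧ w₂.comap (algebraMap k K) = v₀)
    (w₀ : InfinitePlace K) (hw₀ : w₀.comap (algebraMap k K) = v₀) :
    ∃ wB : InfinitePlace K, w₀ ≠ wB ∧ wB.comap (algebraMap k K) = v₀ ∧
      univ.filter (fun w : InfinitePlace K => w.comap (algebraMap k K) = v₀)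
        = {w₀, wB} := by
  classical
  obtain ⟨w₁, w₂, h12, h1, h2⟩ := hsplit
  set F := univ.filter (fun w : InfinitePlace K => w.comap (algebraMap k K) = v₀) with hF
  have hsum : ∑ w ∈ F, w.mult = 2 * v₀.mult := by
    rw [hF, sum_mult_fiber, hquad]
  have hpairsub : ({w₁, w₂} : Finset (InfinitePlace K)) ⊆ F := by
    intro w hw
    rcases Finset.mem_insert.mp hw with h | h
    · exact Finset.mem_filter.mpr ⟨Finset.mem_univ _, h ▸ h1⟩
    · rw [Finset.mem_singleton] at h
      exact Finset.mem_filter.mpr ⟨Finset.mem_univ _, h ▸ h2⟩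
  have hsub : F ⊆ ({w₁, w₂} : Finset (InfinitePlace K)) := by
    intro w hw
    by_contra hnotin
    have hins : insert w ({w₁, w₂} : Finset (InfinitePlace K)) ⊆ F :=
      Finset.insert_subset hw hpairsub
    have h3 := Finset.sum_le_sum_of_subset (f := fun w : InfinitePlace K => w.mult) hins
    rw [Finset.sum_insert hnotin, Finset.sum_pair h12, hsum] at h3
    have l1 : v₀.mult ≤ w₁.mult := h1 ▸ mult_comap_le _ w₁
    have l2 : v₀.mult ≤ w₂.mult := h2 ▸ mult_comap_le _ w₂
    have l3 : 0 < w.mult := mult_pos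
    omega
  have hF2 : F = ({w₁, w₂} : Finset (InfinitePlace K)) :=
    Finset.Subset.antisymm hsub hpairsub
  have hw₀mem : w₀ ∈ F := Finset.mem_filter.mpr ⟨Finset.mem_univ _, hw₀⟩
  rw [hF2, Finset.mem_insert, Finset.mem_singleton] at hw₀mem
  rcases hw₀mem with h | h
  · exact ⟨w₂, h ▸ h12, h2, by rw [hF2, h]⟩
  · exact ⟨w₁, fun hc => h12 (by rw [← hc, h]), h1, by rw [hF2, h, Finset.pair_comm]⟩

lemma pow_mult_eq_exp (ε : (𝓞 K)ˣ) (w : InfinitePlace K) :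
    w ((ε : 𝓞 K) : K) ^ w.mult = Real.exp (Phi K ε w) := by
  have hpos : 0 < w ((ε : 𝓞 K) : K) :=
    AbsoluteValue.pos _ (by simpa using NumberField.Units.coe_ne_zero ε)
  show _ = Real.exp ((w.mult : ℝ) * Real.log (w ((ε : 𝓞 K) : K)))
  rw [Real.exp_nat_mul, Real.exp_log hpos]

end Final

/-- Let `K/k` be a quadratic extension of number fields, `v₀` an archimedean place of `k`
with `K ⊆ k_{v₀}` (i.e. `v₀` splits in `K`), `w₀` a place of `K` above `v₀`, and `U` a
finite-index subgroup of the norm-one unit group `𝔬_K¹`. Then for every `δ > 0` there is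
`ε ∈ U` with `|ε|_{w₀} < δ` and `1/(1+δ) < |ε|_w < 1+δ` for all archimedean places `w`
not above `v₀`; absolute values are normalized by the local degrees `mult`. -/
theorem stmt6 (k K : Type*) [Field k] [Field K] [NumberField k] [NumberField K]
    [Algebra k K] (hquad : Module.finrank k K = 2)
    (v₀ : InfinitePlace k)
    (hsplit : ∃ w₁ w₂ : InfinitePlace K, w₁ ≠ w₂ ∧
      w₁.comap (algebraMap k K) = v₀ ∧ w₂.comap (algebraMap k K) = v₀)
    (w₀ : InfinitePlace K) (hw₀ : w₀.comap (algebraMap k K) = v₀)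
    (N U : Subgroup (𝓞 K)ˣ)
    (hN : ∀ ε : (𝓞 K)ˣ, ε ∈ N ↔ Algebra.norm k ((ε : 𝓞 K) : K) = 1)
    (hUN : U ≤ N) (hindex : U.relIndex N ≠ 0) :
    ∀ δ : ℝ, 0 < δ → ∃ ε ∈ U,
      w₀ ((ε : 𝓞 K) : K) ^ w₀.mult < δ ∧
      ∀ w : InfinitePlace K, w.comap (algebraMap k K) ≠ v₀ →
        1 / (1 + δ) < w ((ε : 𝓞 K) : K) ^ w.mult ∧
        w ((ε : 𝓞 K) : K) ^ w.mult < 1 + δ := by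
  classical
  haveI : FiniteDimensional k K :=
    FiniteDimensional.of_finrank_pos (by rw [hquad]; norm_num)
  obtain ⟨wB, hneB, hwB, hfiber⟩ := fiber_structure hquad v₀ hsplit w₀ hw₀
  set e : InfinitePlace K → ℝ := fun w => (if w = w₀ then (1 : ℝ) else 0)
      - (if w = wB then (1 : ℝ) else 0) with he
  have hespan : e ∈ Submodule.span ℝ (Phi K '' (U : Set (𝓞 K)ˣ)) :=
    e_mem_span hquad v₀ w₀ wB hneB hw₀ hwB hfiber N U hN hUN hindex
  intro δ hδ
  set η := Real.log (1 + δ) with hη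
  have hηpos : 0 < η := Real.log_pos (by linarith)
  set c : ℝ := |Real.log δ| + 1 + η with hc
  have hcpos : 0 < c := by positivity
  rw [Submodule.mem_span_set'] at hespan
  obtain ⟨n, f, g, hcomb⟩ := hespan
  have hg : ∀ i, ∃ ε : (𝓞 K)ˣ, ε ∈ U ∧ Phi K ε = (g i : InfinitePlace K → ℝ) := by
    intro i
    obtain ⟨ε, hε, hΦ⟩ := (g i).2
    exact ⟨ε, hε, hΦ⟩
  choose εf hεU hεΦ using hg
  set R := ∑ i, ‖Phi K (εf i)‖ with hR
  set b : ℕ → (𝓞 K)ˣ := fun m => ∏ i, εf i ^ (⌊-((m : ℝ) * c) * f i⌋ : ℤ) with hb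
  have hbU : ∀ m, b m ∈ U := fun m =>
    Subgroup.prod_mem U (fun i _ => Subgroup.zpow_mem U (hεU i) _)
  set μ : ℕ → (InfinitePlace K → ℝ) := fun m => Phi K (b m) + ((m : ℝ) * c) • e with hμ
  have hμeq : ∀ m, μ m = ∑ i, (((⌊-((m : ℝ) * c) * f i⌋ : ℤ) : ℝ)
      + ((m : ℝ) * c) * f i) • Phi K (εf i) := by
    intro m
    have h1 : Phi K (b m) = ∑ i, ((⌊-((m : ℝ) * c) * f i⌋ : ℤ) : ℝ) • Phi K (εf i) := by
      rw [hb]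
      rw [Phi_prod]
      exact Finset.sum_congr rfl (fun i _ => Phi_zpow (εf i) _)
    have h2 : ((m : ℝ) * c) • e = ∑ i, (((m : ℝ) * c) * f i) • Phi K (εf i) := by
      rw [← hcomb, Finset.smul_sum]
      exact Finset.sum_congr rfl (fun i _ => by rw [smul_smul, hεΦ])
    rw [show μ m = Phi K (b m) + ((m : ℝ) * c) • e from rfl, h1, h2,
      ← Finset.sum_add_distrib]
    exact Finset.sum_congr rfl (fun i _ => by rw [add_smul])
  have hμbound : ∀ m, ‖μ m‖ ≤ R := by
    intro m
    rw [hμeq m, hR]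
    refine (norm_sum_le _ _).trans (Finset.sum_le_sum (fun i _ => ?_))
    rw [norm_smul, Real.norm_eq_abs]
    have habs : |((⌊-((m : ℝ) * c) * f i⌋ : ℤ) : ℝ) + ((m : ℝ) * c) * f i| ≤ 1 := by
      set s : ℝ := -((m : ℝ) * c) * f i with hs
      have h1 : ((⌊s⌋ : ℤ) : ℝ) + ((m : ℝ) * c) * f i = -(Int.fract s) := by
        rw [Int.fract]; push_cast; rw [hs]; ring
      rw [h1, abs_neg, abs_of_nonneg (Int.fract_nonneg s)]
      exact (Int.fract_lt_one s).le
    calc |((⌊-((m : ℝ) * c) * f i⌋ : ℤ) : ℝ) + ((m : ℝ) * c) * f i| * ‖Phi K (εf i)‖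
        ≤ 1 * ‖Phi K (εf i)‖ := by
          exact mul_le_mul_of_nonneg_right habs (norm_nonneg _)
      _ = ‖Phi K (εf i)‖ := one_mul _
  have hcb : ∀ m, μ m ∈ Metric.closedBall (0 : InfinitePlace K → ℝ) R := fun m => by
    simpa [Metric.mem_closedBall, dist_zero_right] using hμbound m
  obtain ⟨a, -, ψ, hψmono, hψtend⟩ :=
    (isCompact_closedBall (0 : InfinitePlace K → ℝ) R).tendsto_subseq hcb
  rw [Metric.tendsto_atTop] at hψtend
  obtain ⟨M, hM⟩ := hψtend (η / 2) (by positivity)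
  set m₂ := ψ M with hm₂
  set m₁ := ψ (M + 1) with hm₁
  have hlt : m₂ < m₁ := hψmono (Nat.lt_succ_self M)
  have hd : dist (μ m₁) (μ m₂) < η := by
    calc dist (μ m₁) (μ m₂) ≤ dist (μ m₁) a + dist (μ m₂) a := dist_triangle_right _ _ _
      _ < η / 2 + η / 2 := add_lt_add (hM (M + 1) (Nat.le_succ M)) (hM M le_rfl)
      _ = η := by ring
  set ε : (𝓞 K)ˣ := b m₁ * (b m₂)⁻¹ with hεdef
  have hεU' : ε ∈ U := mul_mem (hbU m₁) (inv_mem (hbU m₂))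
  set q : ℝ := (m₁ : ℝ) - (m₂ : ℝ) with hq
  have hq1 : 1 ≤ q := by
    rw [hq]
    have : (m₂ : ℝ) + 1 ≤ (m₁ : ℝ) := by exact_mod_cast hlt
    linarith
  have hkey : ∀ w : InfinitePlace K, |Phi K ε w + (q * c) * e w| < η := by
    intro w
    have h1 : Phi K ε w = Phi K (b m₁) w - Phi K (b m₂) w := by
      rw [hεdef, Phi_mul, Phi_inv]
      simp [sub_eq_add_neg]
    have h2 : Phi K ε w + (q * c) * e w = (μ m₁ - μ m₂) w := by
      simp only [Pi.sub_apply, hμ, Pi.add_apply, Pi.smul_apply, smul_eq_mul]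
      rw [h1, hq]
      ring
    rw [h2, ← Real.norm_eq_abs]
    calc ‖(μ m₁ - μ m₂) w‖ ≤ ‖μ m₁ - μ m₂‖ := norm_le_pi_norm _ w
      _ = dist (μ m₁) (μ m₂) := (dist_eq_norm _ _).symm
      _ < η := hd
  refine ⟨ε, hεU', ?_, ?_⟩
  · have h := hkey w₀
    have hew : e w₀ = 1 := by
      simp [he, hneB]
    rw [hew, mul_one] at h
    have h2 : Phi K ε w₀ < η - q * c := by
      have := abs_lt.mp h
      linarith [this.2]
    have h3 : η - q * c ≤ η - c := by
      have : c ≤ q * c := le_mul_of_one_le_left hcpos.le hq1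
      linarith
    have h4 : η - c < Real.log δ := by
      rw [hc]
      have := neg_abs_le (Real.log δ)
      linarith
    rw [pow_mult_eq_exp, ← Real.exp_log hδ]
    exact Real.exp_lt_exp.mpr (by linarith)
  · intro w hw
    have hw1 : w ≠ w₀ := fun h => hw (h ▸ hw₀)
    have hw2 : w ≠ wB := fun h => hw (h ▸ hwB)
    have h := hkey w
    have hew : e w = 0 := by simp [he, hw1, hw2]
    rw [hew, mul_zero, add_zero] at h
    have habs := abs_lt.mp h
    have hexp : w ((ε : 𝓞 K) : K) ^ w.mult = Real.exp (Phi K ε w) := pow_mult_eq_exp ε w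
    constructor
    · rw [hexp]
      have h1 : (1 : ℝ) / (1 + δ) = Real.exp (-η) := by
        rw [Real.exp_neg, hη, Real.exp_log (by linarith : (0:ℝ) < 1 + δ)]
        rw [one_div]
      rw [h1]
      exact Real.exp_lt_exp.mpr habs.1
    · rw [hexp]
      have h1 : (1 : ℝ) + δ = Real.exp η := by
        rw [hη, Real.exp_log (by linarith : (0:ℝ) < 1 + δ)]
      rw [h1]
      exact Real.exp_lt_exp.mpr habs.2
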